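/- Let $\mathfrak{s}$ be any Lie algebra, $\pi_1$ the Lie--Poisson bivector on $\mathfrak{s}^*$, $E$ the Euler vector field, and $x \in \mathfrak{s}$ a linear function on $\mathfrak{s}^*$. Set $X = xE$ and $q = x^2/2$. Then $[[X,\pi_1],[X,\pi_1]] = 2\,\pi_1(q)\wedge\pi_1$ and $[[X,\pi_1],\pi_1(q)] = 0$ (the tautological solution of the basic identities). -/

import Mathlib

open scoped BigOperators

/-- Partial derivative of a function on `ℝ^k` in the `r`-th coordinate direction. -/
noncomputable def pd {k : ℕ} (f : (Fin k → ℝ) → ℝ) (r : Fin k) (p : Fin k → ℝ) : ℝ :=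
  fderiv ℝ f p (Pi.single r 1)

/-- Schouten bracket (Lie derivative) of a bivector field `P` along a vector field `X`,
in coordinates: `[X,P]^{ij} = Σ_r (X^r ∂_r P^{ij} - P^{rj} ∂_r X^i - P^{ir} ∂_r X^j)`. -/
noncomputable def lieDerivBiv {k : ℕ} (X : (Fin k → ℝ) → Fin k → ℝ)
    (P : (Fin k → ℝ) → Fin k → Fin k → ℝ) (p : Fin k → ℝ) (i j : Fin k) : ℝ :=
  ∑ r, (X p r * pd (fun z => P z i j) r p - P p r j * pd (fun z => X z i) r p
      - P p i r * pd (fun z => X z j) r p)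

/-- Schouten bracket of two bivector fields (a trivector field), in coordinates. -/
noncomputable def schoutenBB {k : ℕ} (P R : (Fin k → ℝ) → Fin k → Fin k → ℝ)
    (p : Fin k → ℝ) (i j l : Fin k) : ℝ :=
  -∑ r, (P p r i * pd (fun z => R z j l) r p + P p r j * pd (fun z => R z l i) r p
       + P p r l * pd (fun z => R z i j) r p + R p r i * pd (fun z => P z j l) r p
       + R p r j * pd (fun z => P z l i) r p + R p r l * pd (fun z => P z i j) r p)

/-- Wedge product of a vector field with a bivector field (a trivector field). -/
def wedgeVB {k : ℕ} (X : (Fin k → ℝ) → Fin k → ℝ)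
    (P : (Fin k → ℝ) → Fin k → Fin k → ℝ) (p : Fin k → ℝ) (i j l : Fin k) : ℝ :=
  X p i * P p j l + X p j * P p l i + X p l * P p i j

/-- Hamiltonian vector field of `f` with respect to the bivector `P` (contraction of `P`
with `df` over the second index, the convention of the paper). -/
noncomputable def hamVF {k : ℕ} (P : (Fin k → ℝ) → Fin k → Fin k → ℝ)
    (f : (Fin k → ℝ) → ℝ) (p : Fin k → ℝ) (i : Fin k) : ℝ :=
  ∑ j, P p i j * pd f j p


namespace TS
set_option linter.unusedSectionVars false

section PD
variable {k : ℕ} (r : Fin k) (p : Fin k → ℝ)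

lemma hasFDerivAt_coord (i : Fin k) :
    HasFDerivAt (fun z : Fin k → ℝ => z i)
      (ContinuousLinearMap.proj (R := ℝ) (φ := fun _ : Fin k => ℝ) i) p :=
  (ContinuousLinearMap.proj (R := ℝ) (φ := fun _ : Fin k => ℝ) i).hasFDerivAt

lemma hasFDerivAt_lin (v : Fin k → ℝ) :
    HasFDerivAt (fun z : Fin k → ℝ => ∑ i, v i * z i)
      (∑ i, v i • ContinuousLinearMap.proj (R := ℝ) (φ := fun _ : Fin k => ℝ) i) p := by
  exact HasFDerivAt.fun_sum fun i _ => ((hasFDerivAt_coord p i).const_mul (v i))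

lemma pd_lin (v : Fin k → ℝ) : pd (fun z => ∑ i, v i * z i) r p = v r := by
  rw [pd, (hasFDerivAt_lin p v).fderiv]
  simp [Pi.single_apply]

lemma pd_lin_mul_lin (u v : Fin k → ℝ) :
    pd (fun z => (∑ i, u i * z i) * (∑ i, v i * z i)) r p
      = u r * (∑ i, v i * p i) + (∑ i, u i * p i) * v r := by
  rw [pd, ((hasFDerivAt_lin p u).fun_mul (hasFDerivAt_lin p v)).fderiv]
  simp [Pi.single_apply]
  ring

lemma pd_sq_half (v : Fin k → ℝ) :
    pd (fun z => (∑ i, v i * z i) * (∑ i, v i * z i) / 2) r p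
      = (∑ i, v i * p i) * v r := by
  have he : (fun z : Fin k → ℝ => (∑ i, v i * z i) * (∑ i, v i * z i) / 2)
      = fun z : Fin k → ℝ => ((∑ i, v i * z i) * (∑ i, v i * z i)) * (2:ℝ)⁻¹ := by
    funext z; rw [div_eq_mul_inv]
  rw [pd, he, (((hasFDerivAt_lin p v).fun_mul (hasFDerivAt_lin p v)).mul_const ((2:ℝ)⁻¹)).fderiv]
  simp [Pi.single_apply]
  ring

lemma pd_Bform (u v w b : Fin k → ℝ) (i j : Fin k) :
    pd (fun z => (∑ m, u m * z m) * z i - (∑ m, v m * z m) * z j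
        - (∑ m, w m * z m) * (∑ m, b m * z m)) r p
      = (u r * p i + (∑ m, u m * p m) * (if i = r then 1 else 0))
        - (v r * p j + (∑ m, v m * p m) * (if j = r then 1 else 0))
        - (w r * (∑ m, b m * p m) + (∑ m, w m * p m) * b r) := by
  rw [pd, ((((hasFDerivAt_lin p u).fun_mul (hasFDerivAt_coord p i)).fun_sub
      ((hasFDerivAt_lin p v).fun_mul (hasFDerivAt_coord p j))).fun_sub
      ((hasFDerivAt_lin p w).fun_mul (hasFDerivAt_lin p b))).fderiv]
  simp [Pi.single_apply]
  split_ifs <;> ring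
end PD

variable {n : ℕ}

def tsP (c : Fin n → Fin n → Fin n → ℝ) (p : Fin n → ℝ) (i j : Fin n) : ℝ := ∑ k, c i j k * p k
def tsx (a p : Fin n → ℝ) : ℝ := ∑ k, a k * p k
def tsh (c : Fin n → Fin n → Fin n → ℝ) (a : Fin n → ℝ) (i r : Fin n) : ℝ := ∑ k, c i k r * a k
def tsH (c : Fin n → Fin n → Fin n → ℝ) (a p : Fin n → ℝ) (i : Fin n) : ℝ := ∑ k, tsP c p i k * a k
def tsB (c : Fin n → Fin n → Fin n → ℝ) (a p : Fin n → ℝ) (i j : Fin n) : ℝ :=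
  tsH c a p j * p i - tsH c a p i * p j - tsx a p * tsP c p i j
def tsM (c : Fin n → Fin n → Fin n → ℝ) (a p : Fin n → ℝ) (i j : Fin n) : ℝ := ∑ r, tsP c p r i * tsh c a j r
def tsK (c : Fin n → Fin n → Fin n → ℝ) (a p : Fin n → ℝ) (i : Fin n) : ℝ := ∑ r, tsH c a p r * tsh c a i r
def tsDB (c : Fin n → Fin n → Fin n → ℝ) (a p : Fin n → ℝ) (r i j : Fin n) : ℝ :=
  tsh c a j r * p i + tsH c a p j * (if i = r then 1 else 0) - tsh c a i r * p j
    - tsH c a p i * (if j = r then 1 else 0) - a r * tsP c p i j - tsx a p * c i j r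
def tsDY (c : Fin n → Fin n → Fin n → ℝ) (a p : Fin n → ℝ) (r i : Fin n) : ℝ :=
  a r * tsH c a p i + tsx a p * tsh c a i r

variable (c : Fin n → Fin n → Fin n → ℝ) (a p : Fin n → ℝ)

lemma fub (A B : Fin n → ℝ) (f : Fin n → Fin n → ℝ) :
    ∑ k, A k * ∑ r, B r * f k r = ∑ r, B r * ∑ k, A k * f k r := by
  simp only [Finset.mul_sum]
  rw [Finset.sum_comm]
  exact Finset.sum_congr rfl fun r _ => Finset.sum_congr rfl fun k _ => by ring

lemma sC1 (i j : Fin n) : ∑ r, p r * c i j r = tsP c p i j :=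
  Finset.sum_congr rfl fun _ _ => mul_comm _ _

lemma sC2 : ∑ r, p r * a r = tsx a p :=
  Finset.sum_congr rfl fun _ _ => mul_comm _ _

lemma sC3 (i : Fin n) : ∑ r, p r * tsh c a i r = tsH c a p i := by
  unfold tsh tsH tsP
  simp only [Finset.mul_sum, Finset.sum_mul]
  rw [Finset.sum_comm]
  exact Finset.sum_congr rfl fun k _ => Finset.sum_congr rfl fun m _ => by ring

variable (hc : ∀ i j k, c i j k = - c j i k)
include hc

lemma sPanti (i j : Fin n) : tsP c p i j = -tsP c p j i := by
  unfold tsP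
  rw [← Finset.sum_neg_distrib]
  exact Finset.sum_congr rfl fun k _ => by rw [hc]; ring

lemma sC4 : ∑ r, tsH c a p r * a r = 0 := by
  have key : ∀ r k : Fin n, tsP c p k r * a r * a k = -(tsP c p r k * a k * a r) := fun r k => by
    rw [sPanti c p hc]; ring
  have e0 : ∑ r, tsH c a p r * a r = ∑ r, ∑ k, tsP c p r k * a k * a r := by
    unfold tsH; simp only [Finset.sum_mul]
  have e1 : (∑ r, ∑ k, tsP c p r k * a k * a r) = ∑ k, ∑ r, tsP c p r k * a k * a r :=
    Finset.sum_comm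
  have e2 : (∑ k : Fin n, ∑ r, tsP c p r k * a k * a r)
      = ∑ r, ∑ k, -(tsP c p r k * a k * a r) :=
    Finset.sum_congr rfl fun r _ => Finset.sum_congr rfl fun k _ => key r k
  have e3 : (∑ r, ∑ k, -(tsP c p r k * a k * a r)) = -∑ r, ∑ k, tsP c p r k * a k * a r := by
    simp [Finset.sum_neg_distrib]
  rw [e0]
  have := e1.trans (e2.trans e3)
  linarith

lemma sC5 (i : Fin n) : ∑ r, tsP c p r i * a r = -tsH c a p i := by
  unfold tsH
  rw [← Finset.sum_neg_distrib]
  exact Finset.sum_congr rfl fun k _ => by rw [sPanti c p hc]; ring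

variable (hjac : ∀ i j l k, ∑ m, (c i j m * c m l k + c j l m * c m i k + c l i m * c m j k) = 0)
include hjac

lemma sC9 (i j l : Fin n) :
    (∑ r, tsP c p r i * c j l r) + (∑ r, tsP c p r j * c l i r) + (∑ r, tsP c p r l * c i j r)
      = 0 := by
  have e : ∀ i' j' l' : Fin n, ∑ r, tsP c p r i' * c j' l' r
      = ∑ k, p k * ∑ r, c j' l' r * c r i' k := by
    intro i' j' l'
    unfold tsP
    simp only [Finset.sum_mul, Finset.mul_sum]
    rw [Finset.sum_comm]
    exact Finset.sum_congr rfl fun k _ => Finset.sum_congr rfl fun r _ => by ring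
  rw [e i j l, e j l i, e l i j, ← Finset.sum_add_distrib, ← Finset.sum_add_distrib]
  apply Finset.sum_eq_zero
  intro k _
  have h := hjac i j l k
  have h2 : (∑ r, c j l r * c r i k) + (∑ r, c l i r * c r j k) + (∑ r, c i j r * c r l k)
      = ∑ m, (c i j m * c m l k + c j l m * c m i k + c l i m * c m j k) := by
    rw [Finset.sum_add_distrib, Finset.sum_add_distrib]
    ring
  have h3 : (∑ r, c j l r * c r i k) + (∑ r, c l i r * c r j k) + (∑ r, c i j r * c r l k) = 0 :=
    h2.trans h
  linear_combination p k * h3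

lemma sC8 (i j : Fin n) :
    ∑ r, tsH c a p r * c i j r = tsM c a p j i - tsM c a p i j := by
  have e0 : ∑ r, tsH c a p r * c i j r = ∑ k, a k * ∑ r, tsP c p r k * c i j r := by
    unfold tsH
    simp only [Finset.sum_mul, Finset.mul_sum]
    rw [Finset.sum_comm]
    exact Finset.sum_congr rfl fun k _ => Finset.sum_congr rfl fun r _ => by ring
  have e9 : ∀ k, ∑ r, tsP c p r k * c i j r
      = -(∑ r, tsP c p r i * c j k r) - ∑ r, tsP c p r j * c k i r := by
    intro k
    have := sC9 c p hc hjac k i j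
    linarith
  have f1 : ∑ k, a k * ∑ r, tsP c p r i * c j k r = tsM c a p i j := by
    rw [fub]
    unfold tsM tsh
    exact Finset.sum_congr rfl fun r _ => by
      rw [show (∑ k, a k * c j k r) = ∑ k, c j k r * a k from
        Finset.sum_congr rfl fun k _ => mul_comm _ _]
  have f2 : ∑ k, a k * ∑ r, tsP c p r j * c k i r = -tsM c a p j i := by
    rw [fub]
    unfold tsM tsh
    rw [← Finset.sum_neg_distrib]
    refine Finset.sum_congr rfl fun r _ => ?_
    have hin : (∑ k, a k * c k i r) = -∑ k, c i k r * a k := by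
      rw [← Finset.sum_neg_distrib]
      exact Finset.sum_congr rfl fun k _ => by rw [hc]; ring
    rw [hin]; ring
  calc ∑ r, tsH c a p r * c i j r = ∑ k, a k * ∑ r, tsP c p r k * c i j r := e0
    _ = ∑ k, (-(a k * ∑ r, tsP c p r i * c j k r) - a k * ∑ r, tsP c p r j * c k i r) :=
        Finset.sum_congr rfl fun k _ => by rw [e9 k]; ring
    _ = -(∑ k, a k * ∑ r, tsP c p r i * c j k r) - ∑ k, a k * ∑ r, tsP c p r j * c k i r := by
        rw [Finset.sum_sub_distrib, Finset.sum_neg_distrib]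
    _ = tsM c a p j i - tsM c a p i j := by rw [f1, f2]; ring


omit hc hjac

lemma sK (i : Fin n) : ∑ r, tsH c a p r * tsh c a i r = tsK c a p i := rfl
lemma sM (i j : Fin n) : ∑ r, tsP c p r i * tsh c a j r = tsM c a p i j := rfl

lemma sTA (j l : Fin n) : ∑ r, p r * tsDB c a p r j l
    = 2*(p j * tsH c a p l) - 2*(p l * tsH c a p j) - 2*(tsx a p * tsP c p j l) := by
  have expand : ∀ r, p r * tsDB c a p r j l =
      p j * (p r * tsh c a l r) + (if j = r then tsH c a p l * p r else 0)
      - p l * (p r * tsh c a j r) - (if l = r then tsH c a p j * p r else 0)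
      - tsP c p j l * (p r * a r) - tsx a p * (p r * c j l r) := by
    intro r; unfold tsDB; split_ifs <;> ring
  rw [Finset.sum_congr rfl fun r _ => expand r]
  simp only [Finset.sum_add_distrib, Finset.sum_sub_distrib, ← Finset.mul_sum,
    Finset.sum_ite_eq, Finset.mem_univ, if_true]
  rw [sC3, sC3, sC2, sC1]
  unfold tsH tsx tsP
  ring

include hc hjac
lemma sTB (j l : Fin n) : ∑ r, tsH c a p r * tsDB c a p r j l
    = p j * tsK c a p l - p l * tsK c a p j - tsx a p * tsM c a p l j
      + tsx a p * tsM c a p j l := by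
  have expand : ∀ r, tsH c a p r * tsDB c a p r j l =
      p j * (tsH c a p r * tsh c a l r) + (if j = r then tsH c a p l * tsH c a p r else 0)
      - p l * (tsH c a p r * tsh c a j r) - (if l = r then tsH c a p j * tsH c a p r else 0)
      - tsP c p j l * (tsH c a p r * a r) - tsx a p * (tsH c a p r * c j l r) := by
    intro r; unfold tsDB; split_ifs <;> ring
  rw [Finset.sum_congr rfl fun r _ => expand r]
  simp only [Finset.sum_add_distrib, Finset.sum_sub_distrib, ← Finset.mul_sum,
    Finset.sum_ite_eq, Finset.mem_univ, if_true]
  rw [sK, sK, sC4 c a p hc, sC8 c a p hc hjac]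
  ring

omit hc hjac
include hc
lemma sTC (i j l : Fin n) : ∑ r, tsP c p r i * tsDB c a p r j l
    = p j * tsM c a p i l + tsH c a p l * tsP c p j i - p l * tsM c a p i j
      - tsH c a p j * tsP c p l i + tsP c p j l * tsH c a p i
      - tsx a p * ∑ r, tsP c p r i * c j l r := by
  have expand : ∀ r, tsP c p r i * tsDB c a p r j l =
      p j * (tsP c p r i * tsh c a l r) + (if j = r then tsH c a p l * tsP c p r i else 0)
      - p l * (tsP c p r i * tsh c a j r) - (if l = r then tsH c a p j * tsP c p r i else 0)
      - tsP c p j l * (tsP c p r i * a r) - tsx a p * (tsP c p r i * c j l r) := by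
    intro r; unfold tsDB; split_ifs <;> ring
  rw [Finset.sum_congr rfl fun r _ => expand r]
  simp only [Finset.sum_add_distrib, Finset.sum_sub_distrib, ← Finset.mul_sum,
    Finset.sum_ite_eq, Finset.mem_univ, if_true]
  rw [sM, sM, sC5 c a p hc]
  ring

lemma sCA (j : Fin n) : ∑ r, tsB c a p r j * a r = 2 * (tsx a p * tsH c a p j) := by
  have expand : ∀ r, tsB c a p r j * a r =
      tsH c a p j * (p r * a r) - p j * (tsH c a p r * a r) - tsx a p * (tsP c p r j * a r) := by
    intro r; unfold tsB; ring
  rw [Finset.sum_congr rfl fun r _ => expand r]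
  simp only [Finset.sum_sub_distrib, ← Finset.mul_sum]
  rw [sC2, sC4 c a p hc, sC5 c a p hc]
  ring

omit hc
lemma sCB (j i : Fin n) : ∑ r, tsB c a p r j * tsh c a i r
    = tsH c a p j * tsH c a p i - p j * tsK c a p i - tsx a p * tsM c a p j i := by
  have expand : ∀ r, tsB c a p r j * tsh c a i r =
      tsH c a p j * (p r * tsh c a i r) - p j * (tsH c a p r * tsh c a i r)
        - tsx a p * (tsP c p r j * tsh c a i r) := by
    intro r; unfold tsB; ring
  rw [Finset.sum_congr rfl fun r _ => expand r]
  simp only [Finset.sum_sub_distrib, ← Finset.mul_sum]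
  rw [sC3, sK, sM]

include hc hjac
lemma sT (i j l : Fin n) : ∑ r, tsB c a p r i * tsDB c a p r j l
    = tsH c a p i * (2*(p j * tsH c a p l) - 2*(p l * tsH c a p j) - 2*(tsx a p * tsP c p j l))
      - p i * (p j * tsK c a p l - p l * tsK c a p j - tsx a p * tsM c a p l j
        + tsx a p * tsM c a p j l)
      - tsx a p * (p j * tsM c a p i l + tsH c a p l * tsP c p j i - p l * tsM c a p i j
        - tsH c a p j * tsP c p l i + tsP c p j l * tsH c a p i
        - tsx a p * ∑ r, tsP c p r i * c j l r) := by
  have expand : ∀ r, tsB c a p r i * tsDB c a p r j l =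
      tsH c a p i * (p r * tsDB c a p r j l) - p i * (tsH c a p r * tsDB c a p r j l)
        - tsx a p * (tsP c p r i * tsDB c a p r j l) := by
    intro r; unfold tsB; ring
  rw [Finset.sum_congr rfl fun r _ => expand r]
  simp only [Finset.sum_sub_distrib, ← Finset.mul_sum]
  rw [sTA, sTB c a p hc hjac, sTC c a p hc]

lemma sSch (i j l : Fin n) :
    -∑ r, (tsB c a p r i * tsDB c a p r j l + tsB c a p r j * tsDB c a p r l i
      + tsB c a p r l * tsDB c a p r i j + tsB c a p r i * tsDB c a p r j l
      + tsB c a p r j * tsDB c a p r l i + tsB c a p r l * tsDB c a p r i j)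
    = 2 * ((tsx a p * tsH c a p i) * tsP c p j l + (tsx a p * tsH c a p j) * tsP c p l i
      + (tsx a p * tsH c a p l) * tsP c p i j) := by
  simp only [Finset.sum_add_distrib]
  rw [sT c a p hc hjac i j l, sT c a p hc hjac j l i, sT c a p hc hjac l i j]
  have h9 := sC9 c p hc hjac i j l
  have e1 := sPanti c p hc j i
  have e2 := sPanti c p hc l j
  have e3 := sPanti c p hc i l
  rw [e1, e2, e3]
  linear_combination (-2 * tsx a p * tsx a p) * h9

omit hjac
lemma sBanti (i j : Fin n) : tsB c a p i j = -tsB c a p j i := by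
  unfold tsB; rw [sPanti c p hc]; ring

include hjac
lemma sLie (i j : Fin n) :
    ∑ r, (tsx a p * tsH c a p r * tsDB c a p r i j - tsB c a p r j * tsDY c a p r i
      - tsB c a p i r * tsDY c a p r j) = 0 := by
  have expand : ∀ r, tsx a p * tsH c a p r * tsDB c a p r i j - tsB c a p r j * tsDY c a p r i
      - tsB c a p i r * tsDY c a p r j
      = tsx a p * (tsH c a p r * tsDB c a p r i j) - tsH c a p i * (tsB c a p r j * a r)
        - tsx a p * (tsB c a p r j * tsh c a i r) + tsH c a p j * (tsB c a p r i * a r)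
        + tsx a p * (tsB c a p r i * tsh c a j r) := by
    intro r; rw [sBanti c a p hc i r]; unfold tsDY; ring
  rw [Finset.sum_congr rfl fun r _ => expand r]
  simp only [Finset.sum_add_distrib, Finset.sum_sub_distrib, ← Finset.mul_sum]
  rw [sTB c a p hc hjac i j, sCA c a p hc i, sCA c a p hc j, sCB c a p i j, sCB c a p j i]
  ring

end TS


namespace TS
set_option linter.unusedSectionVars false
section Bridge
variable {n : ℕ} (c : Fin n → Fin n → Fin n → ℝ) (a p : Fin n → ℝ)

lemma sHlin (i : Fin n) : tsH c a p i = ∑ m, tsh c a i m * p m := by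
  rw [← sC3 c a p i]
  exact Finset.sum_congr rfl fun m _ => mul_comm _ _

lemma pd_lin_mul_coord (r : Fin n) (u : Fin n → ℝ) (i : Fin n) :
    pd (fun z => (∑ m, u m * z m) * z i) r p
      = u r * p i + (∑ m, u m * p m) * (if i = r then 1 else 0) := by
  rw [pd, ((hasFDerivAt_lin p u).fun_mul (hasFDerivAt_coord p i)).fderiv]
  simp [Pi.single_apply]
  split_ifs <;> ring

lemma sBeq (hcs : ∀ i j k, c i j k = - c j i k) (i j : Fin n) :
    ∑ r, (tsx a p * p r * c i j r
      - tsP c p r j * (a r * p i + tsx a p * (if i = r then 1 else 0))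
      - tsP c p i r * (a r * p j + tsx a p * (if j = r then 1 else 0)))
    = tsB c a p i j := by
  have expand : ∀ r, tsx a p * p r * c i j r
      - tsP c p r j * (a r * p i + tsx a p * (if i = r then 1 else 0))
      - tsP c p i r * (a r * p j + tsx a p * (if j = r then 1 else 0))
      = tsx a p * (p r * c i j r) - p i * (tsP c p r j * a r)
        - (if i = r then tsx a p * tsP c p r j else 0) - p j * (tsP c p i r * a r)
        - (if j = r then tsx a p * tsP c p i r else 0) := by
    intro r; split_ifs <;> ring
  rw [Finset.sum_congr rfl fun r _ => expand r]
  simp only [Finset.sum_sub_distrib, ← Finset.mul_sum, Finset.sum_ite_eq, Finset.mem_univ,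
    if_true]
  rw [sC1, sC5 c a p hcs j, show (∑ r, tsP c p i r * a r) = tsH c a p i from rfl]
  unfold tsB
  ring

lemma hpdB (r : Fin n) (i j : Fin n) :
    pd (fun w => tsB c a w i j) r p = tsDB c a p r i j := by
  have hf : (fun w => tsB c a w i j)
      = fun z => (∑ m, tsh c a j m * z m) * z i - (∑ m, tsh c a i m * z m) * z j
        - (∑ m, a m * z m) * (∑ m, c i j m * z m) := by
    funext z
    unfold tsB
    rw [sHlin c a z i, sHlin c a z j]
    rfl
  rw [hf, pd_Bform]
  rw [← sHlin c a p i, ← sHlin c a p j]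
  unfold tsDB
  rw [show (∑ m, c i j m * p m) = tsP c p i j from rfl,
    show (∑ m, a m * p m) = tsx a p from rfl]
  ring

theorem main (hcs : ∀ i j k, c i j k = - c j i k)
    (hjacs : ∀ i j l k, ∑ m, (c i j m * c m l k + c j l m * c m i k + c l i m * c m j k) = 0)
    (π₁ : (Fin n → ℝ) → Fin n → Fin n → ℝ) (X : (Fin n → ℝ) → Fin n → ℝ)
    (q : (Fin n → ℝ) → ℝ)
    (hπ : ∀ p i j, π₁ p i j = tsP c p i j)
    (hX' : ∀ p i, X p i = tsx a p * p i)
    (hq' : ∀ p, q p = tsx a p * tsx a p / 2) :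
    (∀ p i j l, schoutenBB (lieDerivBiv X π₁) (lieDerivBiv X π₁) p i j l =
        2 * wedgeVB (hamVF π₁ q) π₁ p i j l) ∧
    (∀ p i j, lieDerivBiv (hamVF π₁ q) (lieDerivBiv X π₁) p i j = 0) := by
  have hqf : q = fun z => (∑ m, a m * z m) * (∑ m, a m * z m) / 2 := funext fun z => hq' z
  have hpdq : ∀ (z : Fin n → ℝ) (r : Fin n), pd q r z = tsx a z * a r := by
    intro z r
    rw [hqf, pd_sq_half]
    rfl
  have hY : ∀ (z : Fin n → ℝ) i, hamVF π₁ q z i = tsx a z * tsH c a z i := by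
    intro z i
    unfold hamVF tsH
    simp only [hpdq, hπ]
    rw [Finset.mul_sum]
    exact Finset.sum_congr rfl fun m _ => by ring
  have hπf : ∀ i j, (fun z => π₁ z i j) = fun z => ∑ m, c i j m * z m :=
    fun i j => funext fun z => hπ z i j
  have hXf : ∀ i, (fun z => X z i) = fun z => (∑ m, a m * z m) * z i :=
    fun i => funext fun z => hX' z i
  have hpdπ : ∀ (z : Fin n → ℝ) r i j, pd (fun w => π₁ w i j) r z = c i j r := by
    intro z r i j
    rw [hπf i j, pd_lin]
  have hpdX : ∀ (z : Fin n → ℝ) r i, pd (fun w => X w i) r z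
      = a r * z i + tsx a z * (if i = r then 1 else 0) := by
    intro z r i
    rw [hXf i, pd_lin_mul_coord]
    rfl
  have hLB : ∀ (z : Fin n → ℝ) i j, lieDerivBiv X π₁ z i j = tsB c a z i j := by
    intro z i j
    unfold lieDerivBiv
    simp only [hpdπ, hpdX]
    simp only [hπ, hX']
    exact sBeq c a z hcs i j
  have hW : lieDerivBiv X π₁ = tsB c a :=
    funext fun z => funext fun i => funext fun j => hLB z i j
  have hYf : ∀ i, (fun z => hamVF π₁ q z i)
      = fun z => (∑ m, a m * z m) * (∑ m, tsh c a i m * z m) := by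
    intro i
    funext z
    rw [hY z i, sHlin c a z i]
    rfl
  have hpdY : ∀ (z : Fin n → ℝ) r i, pd (fun w => hamVF π₁ q w i) r z = tsDY c a z r i := by
    intro z r i
    rw [hYf i, pd_lin_mul_lin]
    rw [← sHlin c a z i]
    unfold tsDY
    rfl
  constructor
  · intro p i j l
    rw [hW]
    unfold schoutenBB wedgeVB
    simp only [hpdB]
    simp only [hY, hπ]
    rw [sSch c a p hcs hjacs i j l]
  · intro p i j
    rw [hW]
    unfold lieDerivBiv
    simp only [hpdB, hpdY]
    simp only [hY]
    exact sLie c a p hcs hjacs i j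
end Bridge
end TS


/-- Let `𝔰` be any Lie algebra, `π₁` the Lie–Poisson bivector on `𝔰*`, `E` the
Euler vector field, `x ∈ 𝔰` a linear function on `𝔰*`.  Set `X = xE` and `q = x²/2`.  Then
`[[X,π₁],[X,π₁]] = 2 π₁(q) ∧ π₁` and `[[X,π₁],π₁(q)] = 0` (the tautological solution of the
basic identities).  Here `[[X,π₁],π₁(q)] = -[π₁(q),[X,π₁]]` is the bracket of the bivector
`[X,π₁]` with the hamiltonian vector field `π₁(q)`. -/
theorem tautological_solution
    (n : ℕ) (L : Type*) [LieRing L] [LieAlgebra ℝ L] (bs : Module.Basis (Fin n) ℝ L)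
    (π₁ : (Fin n → ℝ) → Fin n → Fin n → ℝ)
    (hπ₁ : ∀ p i j, π₁ p i j = ∑ k, bs.repr ⁅bs i, bs j⁆ k * p k)
    (xel : L) (xf : (Fin n → ℝ) → ℝ)
    (hxf : ∀ p, xf p = ∑ i, bs.repr xel i * p i)
    (X : (Fin n → ℝ) → Fin n → ℝ) (hX : ∀ p i, X p i = xf p * p i)
    (q : (Fin n → ℝ) → ℝ) (hq : ∀ p, q p = xf p ^ 2 / 2) :
    (∀ p i j l, schoutenBB (lieDerivBiv X π₁) (lieDerivBiv X π₁) p i j l =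
        2 * wedgeVB (hamVF π₁ q) π₁ p i j l) ∧
    (∀ p i j, lieDerivBiv (hamVF π₁ q) (lieDerivBiv X π₁) p i j = 0) := by
  refine TS.main (fun i j k => bs.repr ⁅bs i, bs j⁆ k) (fun i => bs.repr xel i)
    ?_ ?_ π₁ X q (fun p i j => by rw [hπ₁]; rfl) (fun p i => by rw [hX p i, hxf p]; rfl)
    (fun p => by rw [hq p, hxf p, pow_two]; rfl)
  · intro i j k
    show bs.repr ⁅bs i, bs j⁆ k = -bs.repr ⁅bs j, bs i⁆ k
    have h : ⁅bs i, bs j⁆ = -⁅bs j, bs i⁆ := by rw [← lie_skew]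
    rw [h, map_neg]
    simp
  · intro i j l k
    have key : ∀ (x : L) (l kk : Fin n), bs.repr ⁅x, bs l⁆ kk
        = ∑ m, bs.repr x m * bs.repr ⁅bs m, bs l⁆ kk := by
      intro x l kk
      have φlin : ∀ (f : Fin n → L), ⁅∑ m, f m, bs l⁆ = ∑ m, ⁅f m, bs l⁆ := by
        intro f
        induction (Finset.univ : Finset (Fin n)) using Finset.cons_induction with
        | empty => simp
        | cons m s hm ih => rw [Finset.sum_cons, Finset.sum_cons, add_lie, ih]
      conv_lhs => rw [← bs.sum_repr x]
      rw [φlin]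
      simp only [smul_lie]
      rw [map_sum]
      simp [Finsupp.smul_apply, smul_eq_mul]
    have jj : ⁅⁅bs i, bs j⁆, bs l⁆ + ⁅⁅bs j, bs l⁆, bs i⁆ + ⁅⁅bs l, bs i⁆, bs j⁆ = (0 : L) := by
      have h := lie_jacobi (bs i) (bs j) (bs l)
      rw [← lie_skew ⁅bs i, bs j⁆ (bs l), ← lie_skew ⁅bs j, bs l⁆ (bs i),
        ← lie_skew ⁅bs l, bs i⁆ (bs j)]
      rw [← neg_add, ← neg_add, neg_eq_zero]
      rw [show ⁅bs l, ⁅bs i, bs j⁆⁆ + ⁅bs i, ⁅bs j, bs l⁆⁆ + ⁅bs j, ⁅bs l, bs i⁆⁆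
          = ⁅bs i, ⁅bs j, bs l⁆⁆ + ⁅bs j, ⁅bs l, bs i⁆⁆ + ⁅bs l, ⁅bs i, bs j⁆⁆ by abel]
      exact h
    have h2 := congrArg (fun v : L => bs.repr v k) jj
    simp only [map_add, map_zero, Finsupp.add_apply, Finsupp.coe_zero, Pi.zero_apply] at h2
    rw [key ⁅bs i, bs j⁆ l k, key ⁅bs j, bs l⁆ i k, key ⁅bs l, bs i⁆ j k] at h2
    show ∑ m, (bs.repr ⁅bs i, bs j⁆ m * bs.repr ⁅bs m, bs l⁆ k
      + bs.repr ⁅bs j, bs l⁆ m * bs.repr ⁅bs m, bs i⁆ k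
      + bs.repr ⁅bs l, bs i⁆ m * bs.repr ⁅bs m, bs j⁆ k) = 0
    rw [Finset.sum_add_distrib, Finset.sum_add_distrib]
    linarith [h2]
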